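/- arXiv:1611.07812 — 2 statements merged into one kernel-verified Lean document; each statement's English description precedes it below -/
import Mathlib

section
/- Matching lemma: let Λ be a bounded lattice, A a lattice automaton over Λ and G = (g₀)*·w₁·(g₁)*·w₂⋯wₙ·(gₙ)* a guard with g_i ∈ Λ and nonempty words w_i over Λ. Suppose a word of atoms w ∈ 𝓛(A) decomposes as w = u₀·v₁·u₁·v₂⋯vₙ·uₙ where every letter of u_i is ≤ g_i and v_i ⊑ w_i for all i. Then there exist an initial state q₀ ∈ Q₀, a final state q_f ∈ Q_f, states q_b^1, q_e^1, …, q_b^n, q_e^n and an accepting path for w in A passing successively through q₀, q_b^1, q_e^1, …, q_b^n, q_e^n, q_f such that: the segment of the path reading v_i goes from q_b^i to q_e^i and its labels λ₁'⋯λ_{|w_i|}' give a matching sequence (q_b^i, v^i, q_e^i) ∈ matches(w_i, A) with v_i ⊑ v^i; and every transition label λ used while reading u_i satisfies g_i ⊓ λ ≠ ⊥. -/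
/-- A lattice automaton over a lattice `Λ`: a set of initial states, a set of
final states, and a transition relation labeled by lattice elements. -/
structure LatAuto (Q Λ : Type*) where
  init : Set Q
  final : Set Q
  trans : Set (Q × Λ × Q)

/-- A path `q →^{λ₁⋯λ_m} q'` in a lattice automaton. -/
inductive LatAuto.Path {Q Λ : Type*} (A : LatAuto Q Λ) : Q → List Λ → Q → Prop
  | nil (q : Q) : LatAuto.Path A q [] q
  | cons {q p q' : Q} {a : Λ} {ls : List Λ} :
      (q, a, p) ∈ A.trans → LatAuto.Path A p ls q' → LatAuto.Path A q (a :: ls) q'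

/-- Pointwise order on words over `Λ`: same length and letterwise `≤`. -/
def WordLE {Λ : Type*} [LE Λ] (u v : List Λ) : Prop :=
  List.Forall₂ (· ≤ ·) u v

/-- The language of a lattice automaton: words of atoms that are letterwise
below the labels of some accepting path. -/
def LatAuto.Lang {Q Λ : Type*} [Preorder Λ] [OrderBot Λ] (A : LatAuto Q Λ) :
    Set (List Λ) :=
  {w | (∀ a ∈ w, IsAtom a) ∧
    ∃ q0 ∈ A.init, ∃ qf ∈ A.final, ∃ ls, A.Path q0 ls qf ∧ WordLE w ls}

/-- `interleave n u v = u 0 ++ v 0 ++ u 1 ++ v 1 ++ ⋯ ++ v (n-1) ++ u n`. -/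
def interleave {Λ : Type*} (n : ℕ) (u v : ℕ → List Λ) : List Λ :=
  u 0 ++ ((List.range n).map fun i => v i ++ u (i + 1)).flatten

/-- `matches(w, A)`: triples `(q_b, v, q_e)` such that `A` has a path from `q_b`
to `q_e` with labels `λ'` and `v = w ⊓ λ'` letterwise, all letters of `v`
being different from `⊥`. -/
def MatchesSet {Q Λ : Type*} [Lattice Λ] [OrderBot Λ] (A : LatAuto Q Λ)
    (w : List Λ) : Set (Q × List Λ × Q) :=
  {t | ∃ ls, A.Path t.1 ls t.2.2 ∧ ls.length = w.length ∧
    t.2.1 = List.zipWith (· ⊓ ·) w ls ∧ ∀ x ∈ t.2.1, x ≠ (⊥ : Λ)}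

-- helpers

lemma path_append_split {Q Λ : Type*} (A : LatAuto Q Λ) :
    ∀ (l1 l2 : List Λ) (q q' : Q), A.Path q (l1 ++ l2) q' →
      ∃ p, A.Path q l1 p ∧ A.Path p l2 q'
  | [], l2, q, q', h => ⟨q, LatAuto.Path.nil q, h⟩
  | a :: l1, l2, q, q', h => by
      cases h with
      | cons ht hp =>
        obtain ⟨p, h1, h2⟩ := path_append_split A l1 l2 _ _ hp
        exact ⟨p, LatAuto.Path.cons ht h1, h2⟩

lemma forall₂_split {α β : Type*} {R : α → β → Prop} :
    ∀ {l1 l2 : List α} {l : List β}, List.Forall₂ R (l1 ++ l2) l →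
      ∃ m1 m2, l = m1 ++ m2 ∧ List.Forall₂ R l1 m1 ∧ List.Forall₂ R l2 m2
  | [], l2, l, h => ⟨[], l, rfl, List.Forall₂.nil, h⟩
  | a :: l1, l2, l, h => by
      cases h with
      | cons hr h' =>
        obtain ⟨m1, m2, rfl, h1, h2⟩ := forall₂_split h'
        exact ⟨_ :: m1, m2, rfl, List.Forall₂.cons hr h1, h2⟩

lemma forall₂_mem_right {α β : Type*} {R : α → β → Prop} :
    ∀ {l1 : List α} {l2 : List β}, List.Forall₂ R l1 l2 →
      ∀ b ∈ l2, ∃ a ∈ l1, R a b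
  | _, _, List.Forall₂.nil, b, hb => by simp at hb
  | _, _, List.Forall₂.cons hr h, b, hb => by
      rcases List.mem_cons.1 hb with rfl | hb
      · exact ⟨_, List.mem_cons_self, hr⟩
      · obtain ⟨a, ha, har⟩ := forall₂_mem_right h b hb
        exact ⟨a, List.mem_cons_of_mem _ ha, har⟩

lemma wordle_zip {Λ : Type*} [Lattice Λ] :
    ∀ {v W ν : List Λ}, WordLE v W → WordLE v ν →
      WordLE v (List.zipWith (· ⊓ ·) W ν)
  | _, _, ν, List.Forall₂.nil, _ => by
      cases ν <;> exact List.Forall₂.nil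
  | _, _, _, List.Forall₂.cons h1 hW, List.Forall₂.cons h2 hν =>
      List.Forall₂.cons (le_inf h1 h2) (wordle_zip hW hν)

lemma interleave_succ {Λ : Type*} (n : ℕ) (u v : ℕ → List Λ) :
    interleave (n + 1) u v =
      u 0 ++ v 0 ++ interleave n (fun i => u (i + 1)) (fun i => v (i + 1)) := by
  simp only [interleave, List.range_succ_eq_map, List.map_cons, List.flatten_cons,
    List.map_map]
  simp [Function.comp_def, List.append_assoc]

lemma mem_interleave_u {Λ : Type*} :
    ∀ (n : ℕ) (u v : ℕ → List Λ) (i : ℕ), i ≤ n → ∀ a ∈ u i, a ∈ interleave n u v := by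
  intro n
  induction n with
  | zero =>
    intro u v i hi a ha
    interval_cases i
    simpa [interleave] using ha
  | succ n ih =>
    intro u v i hi a ha
    rw [interleave_succ]
    cases i with
    | zero => simp [ha]
    | succ j =>
      have := ih (fun i => u (i + 1)) (fun i => v (i + 1)) j (by omega) a ha
      simp [this]

lemma mem_interleave_v {Λ : Type*} :
    ∀ (n : ℕ) (u v : ℕ → List Λ) (i : ℕ), i < n → ∀ a ∈ v i, a ∈ interleave n u v := by
  intro n
  induction n with
  | zero => omega
  | succ n ih =>
    intro u v i hi a ha
    rw [interleave_succ]
    cases i with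
    | zero => simp [ha]
    | succ j =>
      have := ih (fun i => u (i + 1)) (fun i => v (i + 1)) j (by omega) a ha
      simp [this]

lemma split_interleave {Q Λ : Type*} [Preorder Λ] (A : LatAuto Q Λ) :
    ∀ (n : ℕ) (u v : ℕ → List Λ) (q0 qf : Q) (ls : List Λ),
      A.Path q0 ls qf → WordLE (interleave n u v) ls →
      ∃ (qb qe : ℕ → Q) (μ ν : ℕ → List Λ),
        (∀ i ≤ n,
          A.Path (if i = 0 then q0 else qe (i - 1)) (μ i)
            (if i = n then qf else qb i) ∧ WordLE (u i) (μ i)) ∧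
        (∀ i < n, A.Path (qb i) (ν i) (qe i) ∧ WordLE (v i) (ν i)) := by
  intro n
  induction n with
  | zero =>
    intro u v q0 qf ls hp hle
    refine ⟨fun _ => q0, fun _ => q0, fun _ => ls, fun _ => [], ?_, by omega⟩
    intro i hi
    interval_cases i
    simp only [interleave, List.range_zero, List.map_nil, List.flatten_nil,
      List.append_nil] at hle
    exact ⟨by simpa using hp, hle⟩
  | succ n ih =>
    intro u v q0 qf ls hp hle
    rw [interleave_succ] at hle
    obtain ⟨m1, m23, rfl, h1, h23⟩ := forall₂_split (l1 := u 0 ++ v 0) hle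
    obtain ⟨m1', m2, rfl, h1', h2⟩ := forall₂_split h1
    obtain ⟨p1, hp1, hp'⟩ := path_append_split A m1' (m2 ++ m23) _ _ (by
      simpa [List.append_assoc] using hp)
    obtain ⟨p2, hp2, hp3⟩ := path_append_split A m2 m23 _ _ hp'
    obtain ⟨qb', qe', μ', ν', hμ', hν'⟩ :=
      ih (fun i => u (i + 1)) (fun i => v (i + 1)) p2 qf m23 hp3 h23
    refine ⟨(fun i => if i = 0 then p1 else qb' (i - 1)),
      (fun i => if i = 0 then p2 else qe' (i - 1)),
      (fun i => if i = 0 then m1' else μ' (i - 1)),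
      (fun i => if i = 0 then m2 else ν' (i - 1)), ?_, ?_⟩
    · intro i hi
      cases i with
      | zero =>
        simp only [if_pos rfl, if_neg (show (0 : ℕ) ≠ n + 1 by omega)]
        exact ⟨hp1, h1'⟩
      | succ j =>
        obtain ⟨hpath, hle'⟩ := hμ' j (by omega)
        simp only [if_neg (Nat.succ_ne_zero j), Nat.add_sub_cancel]
        refine ⟨?_, hle'⟩
        by_cases hj : j = n
        · subst hj
          rw [if_pos rfl]
          rw [if_pos rfl] at hpath
          exact hpath
        · rw [if_neg (show j + 1 ≠ n + 1 by omega)]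
          rw [if_neg hj] at hpath
          exact hpath
    · intro i hi
      cases i with
      | zero =>
        simp only [if_pos rfl]
        exact ⟨hp2, h2⟩
      | succ j =>
        simp only [if_neg (Nat.succ_ne_zero j), Nat.add_sub_cancel]
        exact hν' j (by omega)


/-- **Matching lemma**: if a word of atoms `x ∈ 𝓛(A)` decomposes as
`u 0 · v 0 · u 1 ⋯ v (n-1) · u n` with every letter of `u i` below `g i` and
`v i ⊑ W i`, then there are an initial state `q0`, a final state `qf`, states
`qb i, qe i` and an accepting path for `x` in `A` passing successively through
`q0, qb 0, qe 0, …, qb (n-1), qe (n-1), qf` such that the segment reading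
`v i` goes from `qb i` to `qe i` and its labels `ν i` give a matching sequence
`(qb i, W i ⊓ ν i, qe i) ∈ matches(W i, A)` with `v i ⊑ W i ⊓ ν i`, and every
label `λ'` used while reading `u i` satisfies `g i ⊓ λ' ≠ ⊥`. -/
theorem matching_lemma {Q Λ : Type*} [Lattice Λ] [BoundedOrder Λ] [Finite Q]
    (A : LatAuto Q Λ) (hAfin : A.trans.Finite)
    (hAbot : ∀ t ∈ A.trans, t.2.1 ≠ (⊥ : Λ))
    (n : ℕ) (g : ℕ → Λ) (W : ℕ → List Λ) (hW : ∀ i < n, W i ≠ [])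
    (u v : ℕ → List Λ) (x : List Λ)
    (hx : x ∈ A.Lang) (hdec : x = interleave n u v)
    (hu : ∀ i ≤ n, ∀ a ∈ u i, a ≤ g i)
    (hv : ∀ i < n, WordLE (v i) (W i)) :
    ∃ (q0 qf : Q) (qb qe : ℕ → Q) (μ ν : ℕ → List Λ),
      q0 ∈ A.init ∧ qf ∈ A.final ∧
      (∀ i ≤ n,
        A.Path (if i = 0 then q0 else qe (i - 1)) (μ i)
          (if i = n then qf else qb i) ∧
        WordLE (u i) (μ i) ∧ ∀ l' ∈ μ i, g i ⊓ l' ≠ ⊥) ∧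
      (∀ i < n,
        A.Path (qb i) (ν i) (qe i) ∧ WordLE (v i) (ν i) ∧
        (qb i, List.zipWith (· ⊓ ·) (W i) (ν i), qe i) ∈ MatchesSet A (W i) ∧
        WordLE (v i) (List.zipWith (· ⊓ ·) (W i) (ν i))) := by
  obtain ⟨hatom, q0, hq0, qf, hqf, ls, hpath, hle⟩ := hx
  subst hdec
  obtain ⟨qb, qe, μ, ν, hμ, hν⟩ := split_interleave A n u v q0 qf ls hpath hle
  refine ⟨q0, qf, qb, qe, μ, ν, hq0, hqf, ?_, ?_⟩
  · intro i hi
    obtain ⟨hp, hl⟩ := hμ i hi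
    refine ⟨hp, hl, ?_⟩
    intro l' hl' hbot
    obtain ⟨a, ha, hal⟩ := forall₂_mem_right hl l' hl'
    have hat : IsAtom a := hatom a (mem_interleave_u n u v i hi a ha)
    exact hat.1 (le_bot_iff.1 (hbot ▸ le_inf (hu i hi a ha) hal))
  · intro i hi
    obtain ⟨hp, hl⟩ := hν i hi
    have hvW := hv i hi
    have hz : WordLE (v i) (List.zipWith (· ⊓ ·) (W i) (ν i)) := wordle_zip hvW hl
    refine ⟨hp, hl, ⟨ν i, hp, ?_, rfl, ?_⟩, hz⟩
    · rw [← hvW.length_eq, hl.length_eq]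
    · intro b hb hbot
      obtain ⟨a, ha, hab⟩ := forall₂_mem_right hz b hb
      have hat : IsAtom a := hatom a (mem_interleave_v n u v i hi a ha)
      exact hat.1 (le_bot_iff.1 (hbot ▸ hab))
end

section
/- Let Λ be a bounded lattice, R a rewriting rule over Λ whose rewriting functions f_i and h_i are monotone and map tuples of atoms to words of atoms (respectively, to atoms), and A a lattice automaton over Λ. Suppose a word of atoms w ∈ 𝓛(A) decomposes as w = u₀·v₁·u₁⋯vₙ·uₙ matching the guard of R along an accepting path of A that yields matching sequences (q_b^i, v^i, q_e^i) ∈ matches(w_i, A) with v_i ⊑ v^i, as in the matching lemma. Let A' be the single automaton constructed by the ApplyRule algorithm for this choice of matching sequences, initial state and final state. Then the word w' obtained by rewriting w under R via this decomposition satisfies w' ∈ 𝓛(A'). -/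
/-- A rewriting rule over `Λ`, with guard `(g 0)⋆ · w 0 · (g 1)⋆ · w 1 ⋯ w (n-1) · (g n)⋆`
(the words `w i`, `i < n`, are nonempty) and rewriting functions
`f 0 · h 0 · f 1 · h 1 ⋯ h n · f (n+1)`; the functions `f i : Λ^N → Λ*` and
`h i : Λ × Λ^N → Λ` receive the concatenation of the matched sub-words as a list. -/
structure RewRule (Λ : Type*) where
  n : ℕ
  g : ℕ → Λ
  w : ℕ → List Λ
  w_ne : ∀ i < n, w i ≠ []
  f : ℕ → List Λ → List Λ
  h : ℕ → Λ → List Λ → Λ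

/-- Concatenation `v 0 ++ ⋯ ++ v (n-1)` of the matched sub-words. -/
def matchedVals {Λ : Type*} (n : ℕ) (v : ℕ → List Λ) : List Λ :=
  ((List.range n).map v).flatten

/-- The output word `v₀' · u₀' · v₁' · u₁' ⋯ vₙ' · uₙ' · v_{n+1}'` of a rewriting
rule on the decomposition `u, v`, where `v_i' = f i (v 0 ⋯ v (n-1))` and `u_i'`
replaces each letter `a` of `u i` by `h i a (v 0 ⋯ v (n-1))`. -/
def rewOutput {Λ : Type*} (R : RewRule Λ) (u v : ℕ → List Λ) : List Λ :=
  R.f 0 (matchedVals R.n v) ++ (u 0).map (fun a => R.h 0 a (matchedVals R.n v)) ++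
    ((List.range R.n).map fun i =>
      R.f (i + 1) (matchedVals R.n v) ++
        (u (i + 1)).map fun a => R.h (i + 1) a (matchedVals R.n v)).flatten ++
    R.f (R.n + 1) (matchedVals R.n v)

/-- `x` rewrites to `y` under the rule `R`: `x` decomposes as
`u 0 · v 0 · u 1 ⋯ v (n-1) · u n` with every letter of `u i` below `g i` and
`v i ⊑ w i`, and `y` is the corresponding output word. -/
def Rewrites {Λ : Type*} [Lattice Λ] (R : RewRule Λ) (x y : List Λ) : Prop :=
  ∃ u v : ℕ → List Λ,
    x = interleave R.n u v ∧
    (∀ i ≤ R.n, ∀ a ∈ u i, a ≤ R.g i) ∧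
    (∀ i < R.n, WordLE (v i) (R.w i)) ∧
    y = rewOutput R u v

/-- `R(L)`: the set of words obtained by rewriting a word of `L` under `R`. -/
def RewRule.image {Λ : Type*} [Lattice Λ] (R : RewRule Λ) (L : Set (List Λ)) :
    Set (List Λ) :=
  {y | ∃ x ∈ L, Rewrites R x y}

/-- The rewriting functions of `R` are monotone and map tuples of atoms to
words of atoms (for the `f i`), respectively to atoms (for the `h i`). -/
def RuleOK {Λ : Type*} [Lattice Λ] [OrderBot Λ] (R : RewRule Λ) : Prop :=
  (∀ i ≤ R.n + 1, ∀ V V', WordLE V V' → WordLE (R.f i V) (R.f i V')) ∧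
  (∀ i ≤ R.n + 1, ∀ V, (∀ a ∈ V, IsAtom a) → ∀ a ∈ R.f i V, IsAtom a) ∧
  (∀ i ≤ R.n, ∀ x x' V V', x ≤ x' → WordLE V V' → R.h i x V ≤ R.h i x' V') ∧
  (∀ i ≤ R.n, ∀ x V, IsAtom x → (∀ a ∈ V, IsAtom a) → IsAtom (R.h i x V))

/-- A choice of data for the `ApplyRule` algorithm: an initial state `q0`, a
final state `qf`, and a matching sequence `(mb i, mv i, me i) ∈ matches(w i, A)`
for each guard word `w i`, `i < n`. -/
structure RuleChoice {Q Λ : Type*} [Lattice Λ] [OrderBot Λ] (R : RewRule Λ)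
    (A : LatAuto Q Λ) where
  q0 : Q
  qf : Q
  hq0 : q0 ∈ A.init
  hqf : qf ∈ A.final
  mb : ℕ → Q
  mv : ℕ → List Λ
  me : ℕ → Q
  hm : ∀ i < R.n, (mb i, mv i, me i) ∈ MatchesSet A (R.w i)

/-- States of the automaton built by `ApplyRule`, before identification: states
of `A`, the two fresh states `q₋₁` (`Sum.inr (Sum.inl false)`) and `q_{n+1}`
(`Sum.inr (Sum.inl true)`), and the intermediate states of the fresh chains. -/
abbrev BaseSt (Q : Type*) := Q ⊕ (Bool ⊕ ℕ × ℕ)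

section ApplyRule

variable {Q Λ : Type*} [Lattice Λ] [OrderBot Λ]

/-- Concatenation `v^1 ⋯ v^n` of the matched values of a choice. -/
def choiceV (R : RewRule Λ) (A : LatAuto Q Λ) (c : RuleChoice R A) : List Λ :=
  matchedVals R.n c.mv

/-- The word `w_i' = f i (v^1, …, v^n)` labeling the `i`-th fresh chain. -/
def choiceOut (R : RewRule Λ) (A : LatAuto Q Λ) (c : RuleChoice R A) (i : ℕ) :
    List Λ :=
  R.f i (choiceV R A c)

/-- Source of the `i`-th fresh chain: `q₋₁` for `i = 0`, `q_b^i` for `1 ≤ i ≤ n`,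
and `q_f` for `i = n + 1`. -/
def chainSrc (R : RewRule Λ) (A : LatAuto Q Λ) (c : RuleChoice R A) (i : ℕ) :
    BaseSt Q :=
  if i = 0 then Sum.inr (Sum.inl false)
  else if i ≤ R.n then Sum.inl (c.mb (i - 1))
  else Sum.inl c.qf

/-- Target of the `i`-th fresh chain: `q₀` for `i = 0`, `q_e^i` for `1 ≤ i ≤ n`,
and `q_{n+1}` for `i = n + 1`. -/
def chainDst (R : RewRule Λ) (A : LatAuto Q Λ) (c : RuleChoice R A) (i : ℕ) :
    BaseSt Q :=
  if i = 0 then Sum.inl c.q0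
  else if i ≤ R.n then Sum.inl (c.me (i - 1))
  else Sum.inr (Sum.inl true)

/-- The `j`-th node of the `i`-th fresh chain. -/
def chainNode (R : RewRule Λ) (A : LatAuto Q Λ) (c : RuleChoice R A) (i j : ℕ) :
    BaseSt Q :=
  if j = 0 then chainSrc R A c i
  else if j = (choiceOut R A c i).length then chainDst R A c i
  else Sum.inr (Sum.inr (i, j))

/-- The transitions `δ^{seq}` of the fresh chains, labeled by the successive
letters of the words `w_i'`. -/
def seqTrans (R : RewRule Λ) (A : LatAuto Q Λ) (c : RuleChoice R A) :
    Set (BaseSt Q × Λ × BaseSt Q) :=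
  {t | ∃ i ≤ R.n + 1, ∃ j : ℕ, ∃ hj : j < (choiceOut R A c i).length,
    t = (chainNode R A c i j, (choiceOut R A c i).get ⟨j, hj⟩,
         chainNode R A c i (j + 1))}

/-- The transitions of the rewritten copies `A_i'` of `A`: every transition
label `a` of `A` is replaced by `h i (g i ⊓ a) (v^1, …, v^n)`, transitions
whose label meets `g i` at `⊥` or is rewritten to `⊥` being deleted. -/
def subTrans (R : RewRule Λ) (A : LatAuto Q Λ) (c : RuleChoice R A) :
    Set (BaseSt Q × Λ × BaseSt Q) :=
  {t | ∃ i ≤ R.n, ∃ q a q', (q, a, q') ∈ A.trans ∧ R.g i ⊓ a ≠ ⊥ ∧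
    R.h i (R.g i ⊓ a) (choiceV R A c) ≠ ⊥ ∧
    t = (Sum.inl q, R.h i (R.g i ⊓ a) (choiceV R A c), Sum.inl q')}

/-- Identification of the endpoints of a fresh chain whose labeling word is
empty. -/
def identRel (R : RewRule Λ) (A : LatAuto Q Λ) (c : RuleChoice R A)
    (x y : BaseSt Q) : Prop :=
  ∃ i ≤ R.n + 1, choiceOut R A c i = [] ∧
    x = chainSrc R A c i ∧ y = chainDst R A c i

/-- The automaton `A'` built by the `ApplyRule` algorithm for one choice of
matching sequences and initial/final states: the rewritten copies of `A`
together with the fresh chains, from the fresh initial state `q₋₁` to the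
fresh final state `q_{n+1}`, endpoints of empty chains being identified. -/
def singleAuto (R : RewRule Λ) (A : LatAuto Q Λ) (c : RuleChoice R A) :
    LatAuto (Quot (identRel R A c)) Λ where
  init := {Quot.mk _ (Sum.inr (Sum.inl false))}
  final := {Quot.mk _ (Sum.inr (Sum.inl true))}
  trans := {t | ∃ x a y, ((x, a, y) ∈ seqTrans R A c ∨ (x, a, y) ∈ subTrans R A c) ∧
    t = (Quot.mk _ x, a, Quot.mk _ y)}

/-- `ApplyRule(R, A)`: the union, over all choices of matching sequences and
initial/final states, of the automata `A'`. -/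
def ApplyRule (R : RewRule Λ) (A : LatAuto Q Λ) :
    LatAuto (Σ c : RuleChoice R A, Quot (identRel R A c)) Λ where
  init := {s | s.2 ∈ (singleAuto R A s.1).init}
  final := {s | s.2 ∈ (singleAuto R A s.1).final}
  trans := {t | ∃ (c : RuleChoice R A) (x y : Quot (identRel R A c)) (a : Λ),
    (x, a, y) ∈ (singleAuto R A c).trans ∧ t = (⟨c, x⟩, a, ⟨c, y⟩)}

end ApplyRule

section Aux

variable {Q Λ : Type*} [Lattice Λ] [OrderBot Λ]

theorem LatAuto.Path.append' {A : LatAuto Q Λ} :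
    ∀ {q p : Q} {l : List Λ}, A.Path q l p →
      ∀ {r : Q} {l' : List Λ}, A.Path p l' r → A.Path q (l ++ l') r := by
  intro q p l h1
  induction h1 with
  | nil => intro r l' h2; simpa using h2
  | cons ht _ ih => intro r l' h2; exact LatAuto.Path.cons ht (ih h2)

/-- Path along the `i`-th fresh chain. -/
theorem chainPath (R : RewRule Λ) (A : LatAuto Q Λ) (c : RuleChoice R A)
    (i : ℕ) (hi : i ≤ R.n + 1) :
    (singleAuto R A c).Path (Quot.mk _ (chainSrc R A c i)) (choiceOut R A c i)
      (Quot.mk _ (chainDst R A c i)) := by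
  by_cases hL : choiceOut R A c i = []
  · have hq : Quot.mk (identRel R A c) (chainSrc R A c i)
        = Quot.mk _ (chainDst R A c i) :=
      Quot.sound ⟨i, hi, hL, rfl, rfl⟩
    rw [hL, hq]
    exact LatAuto.Path.nil _
  · have hlen : (choiceOut R A c i).length ≠ 0 := by
      simpa [List.length_eq_zero_iff] using hL
    have key : ∀ m j, j + m = (choiceOut R A c i).length →
        (singleAuto R A c).Path (Quot.mk _ (chainNode R A c i j))
          ((choiceOut R A c i).drop j)
          (Quot.mk _ (chainNode R A c i (choiceOut R A c i).length)) := by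
      intro m
      induction m with
      | zero =>
        intro j hj
        have : j = (choiceOut R A c i).length := by omega
        subst this
        rw [List.drop_length]
        exact LatAuto.Path.nil _
      | succ m ih =>
        intro j hj
        have hjlt : j < (choiceOut R A c i).length := by omega
        rw [List.drop_eq_getElem_cons hjlt]
        refine LatAuto.Path.cons ?_ (ih (j + 1) (by omega))
        refine ⟨chainNode R A c i j, (choiceOut R A c i)[j],
          chainNode R A c i (j + 1), Or.inl ⟨i, hi, j, hjlt, ?_⟩, rfl⟩
        simp
    have h0 : chainNode R A c i 0 = chainSrc R A c i := by simp [chainNode]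
    have hend : chainNode R A c i (choiceOut R A c i).length
        = chainDst R A c i := by
      simp [chainNode, hlen]
    have := key (choiceOut R A c i).length 0 (by omega)
    rwa [h0, hend, List.drop_zero] at this

/-- Path through the rewritten copy `A_i'` simulating a path of `A`. -/
theorem segPathAux (R : RewRule Λ) (A : LatAuto Q Λ) (c : RuleChoice R A)
    (hR : RuleOK R) {V : List Λ} (hVle : WordLE V (choiceV R A c))
    (hVatom : ∀ a ∈ V, IsAtom a) (i : ℕ) (hi : i ≤ R.n) :
    ∀ {ui μ : List Λ}, List.Forall₂ (· ≤ ·) ui μ →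
      (∀ a ∈ ui, IsAtom a) → (∀ a ∈ ui, a ≤ R.g i) →
      ∀ {q q' : Q}, A.Path q μ q' →
      ∃ ls, (singleAuto R A c).Path (Quot.mk _ (Sum.inl q)) ls
          (Quot.mk _ (Sum.inl q'))
        ∧ List.Forall₂ (· ≤ ·) (ui.map fun a => R.h i a V) ls := by
  intro ui μ hf
  induction hf with
  | nil =>
    intro _ _ q q' hp
    cases hp
    exact ⟨[], LatAuto.Path.nil _, List.Forall₂.nil⟩
  | @cons b a ui' μ' hba htail ih =>
    intro hatom hg q q' hp
    cases hp with
    | cons ht hrest =>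
      have hbatom : IsAtom b := hatom b (by simp)
      have hble : b ≤ R.g i ⊓ a := le_inf (hg b (by simp)) hba
      have hne1 : R.g i ⊓ a ≠ ⊥ := fun h => hbatom.1 (le_bot_iff.mp (h ▸ hble))
      have hmono : R.h i b V ≤ R.h i (R.g i ⊓ a) (choiceV R A c) :=
        hR.2.2.1 i hi b _ V _ hble hVle
      have hhatom : IsAtom (R.h i b V) := hR.2.2.2 i hi b V hbatom hVatom
      have hne2 : R.h i (R.g i ⊓ a) (choiceV R A c) ≠ ⊥ := fun h =>
        hhatom.1 (le_bot_iff.mp (h ▸ hmono))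
      obtain ⟨ls, hpls, hfls⟩ := ih (fun x hx => hatom x (by simp [hx]))
        (fun x hx => hg x (by simp [hx])) hrest
      refine ⟨R.h i (R.g i ⊓ a) (choiceV R A c) :: ls,
        LatAuto.Path.cons ?_ hpls, List.Forall₂.cons hmono hfls⟩
      exact ⟨Sum.inl q, _, Sum.inl _,
        Or.inr ⟨i, hi, q, a, _, ht, hne1, hne2, rfl⟩, rfl⟩

end Aux

/-- **Concluding step of the `ApplyRule` soundness proof**: suppose the word of
atoms `x ∈ 𝓛(A)` decomposes as `u 0 · v 0 · u 1 ⋯ v (n-1) · u n` matching the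
guard of `R` (letters of `u i` below `g i`, `v i ⊑ w i`) along an accepting
path of `A` passing through the states of the choice `c` (the path segment
reading `u i` goes from `c.q0`/`c.me (i-1)` to `c.mb i`/`c.qf`), the matching
sequences `(c.mb i, c.mv i, c.me i) ∈ matches(w i, A)` of `c` satisfying
`v i ⊑ c.mv i`. Then the word obtained by rewriting `x` under `R` via this
decomposition is recognized by the single automaton `A'` constructed by the
`ApplyRule` algorithm for this choice. -/
theorem singleAuto_recognizes_rewrite {Q Λ : Type*} [Lattice Λ]
    [BoundedOrder Λ] [Finite Q] (R : RewRule Λ) (A : LatAuto Q Λ)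
    (hAfin : A.trans.Finite) (hAbot : ∀ t ∈ A.trans, t.2.1 ≠ (⊥ : Λ))
    (hR : RuleOK R) (c : RuleChoice R A) (u v : ℕ → List Λ) (x : List Λ)
    (hx : x ∈ A.Lang)
    (hdec : x = interleave R.n u v)
    (hu : ∀ i ≤ R.n, ∀ a ∈ u i, a ≤ R.g i)
    (hv : ∀ i < R.n, WordLE (v i) (R.w i))
    (hlink : ∀ i < R.n, WordLE (v i) (c.mv i))
    (hseg : ∀ i ≤ R.n, ∃ μ : List Λ,
      A.Path (if i = 0 then c.q0 else c.me (i - 1)) μ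
        (if i = R.n then c.qf else c.mb i) ∧ WordLE (u i) μ) :
    rewOutput R u v ∈ (singleAuto R A c).Lang := by
  obtain ⟨hxatom, -⟩ := hx
  have hmemx : ∀ a : Λ, (a ∈ u 0 ∨ ∃ j < R.n, a ∈ v j ∨ a ∈ u (j + 1)) → IsAtom a := by
    intro a ha
    apply hxatom
    rw [hdec]
    simp only [interleave, List.mem_append, List.mem_flatten, List.mem_map,
      List.mem_range]
    rcases ha with h | ⟨j, hj, h | h⟩
    · exact Or.inl h
    · exact Or.inr ⟨_, ⟨j, hj, rfl⟩, List.mem_append_left _ h⟩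
    · exact Or.inr ⟨_, ⟨j, hj, rfl⟩, List.mem_append_right _ h⟩
  have huatom : ∀ i ≤ R.n, ∀ a ∈ u i, IsAtom a := by
    intro i hi a ha
    rcases i with _ | j
    · exact hmemx a (Or.inl ha)
    · exact hmemx a (Or.inr ⟨j, by omega, Or.inr ha⟩)
  have hVatom : ∀ a ∈ matchedVals R.n v, IsAtom a := by
    intro a ha
    simp only [matchedVals, List.mem_flatten, List.mem_map, List.mem_range] at ha
    obtain ⟨l, ⟨j, hj, rfl⟩, h⟩ := ha
    exact hmemx a (Or.inr ⟨j, hj, Or.inl h⟩)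
  have hVle : List.Forall₂ (· ≤ ·) (matchedVals R.n v) (choiceV R A c) := by
    apply List.rel_flatten
    rw [List.forall₂_map_left_iff, List.forall₂_map_right_iff, List.forall₂_same]
    exact fun i hi => hlink i (List.mem_range.mp hi)
  have claim : ∀ k, k ≤ R.n → ∃ ls,
      (singleAuto R A c).Path (Quot.mk _ (Sum.inr (Sum.inl false))) ls
        (Quot.mk _ (Sum.inl (if k = R.n then c.qf else c.mb k)))
      ∧ List.Forall₂ (· ≤ ·)
          (R.f 0 (matchedVals R.n v) ++
            (u 0).map (fun a => R.h 0 a (matchedVals R.n v)) ++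
            ((List.range k).map fun i =>
              R.f (i + 1) (matchedVals R.n v) ++
                (u (i + 1)).map fun a => R.h (i + 1) a (matchedVals R.n v)).flatten)
          ls := by
    intro k
    induction k with
    | zero =>
      intro _
      obtain ⟨μ, hμp, hμle⟩ := hseg 0 (Nat.zero_le _)
      rw [if_pos rfl] at hμp
      obtain ⟨ls0, hp0, hf0⟩ := segPathAux R A c hR hVle hVatom 0 (Nat.zero_le _)
        hμle (huatom 0 (Nat.zero_le _)) (hu 0 (Nat.zero_le _)) hμp
      have hc := chainPath R A c 0 (by omega)
      have hsrc : chainSrc R A c 0 = Sum.inr (Sum.inl false) := by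
        unfold chainSrc; rw [if_pos rfl]
      have hdst : chainDst R A c 0 = Sum.inl c.q0 := by
        unfold chainDst; rw [if_pos rfl]
      rw [hsrc, hdst] at hc
      refine ⟨choiceOut R A c 0 ++ ls0, hc.append' hp0, ?_⟩
      have hfm : List.Forall₂ (· ≤ ·) (R.f 0 (matchedVals R.n v))
          (choiceOut R A c 0) := hR.1 0 (by omega) _ _ hVle
      simpa using List.rel_append hfm hf0
    | succ k ih =>
      intro hk1
      have hk : k < R.n := hk1
      obtain ⟨ls, hp, hf⟩ := ih (le_of_lt hk)
      rw [if_neg (Nat.ne_of_lt hk)] at hp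
      have hc := chainPath R A c (k + 1) (by omega)
      have hsrc : chainSrc R A c (k + 1) = Sum.inl (c.mb k) := by
        unfold chainSrc; rw [if_neg (by omega), if_pos hk1]; rfl
      have hdst : chainDst R A c (k + 1) = Sum.inl (c.me k) := by
        unfold chainDst; rw [if_neg (by omega), if_pos hk1]; rfl
      rw [hsrc, hdst] at hc
      obtain ⟨μ, hμp, hμle⟩ := hseg (k + 1) hk1
      rw [if_neg (by omega)] at hμp
      simp only [Nat.add_sub_cancel] at hμp
      obtain ⟨ls1, hp1, hf1⟩ := segPathAux R A c hR hVle hVatom (k + 1) hk1 hμle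
        (huatom (k + 1) hk1) (hu (k + 1) hk1) hμp
      have hfm : List.Forall₂ (· ≤ ·) (R.f (k + 1) (matchedVals R.n v))
          (choiceOut R A c (k + 1)) := hR.1 (k + 1) (by omega) _ _ hVle
      refine ⟨ls ++ (choiceOut R A c (k + 1) ++ ls1),
        hp.append' (hc.append' hp1), ?_⟩
      have htot := List.rel_append hf (List.rel_append hfm hf1)
      rw [List.range_succ]
      simpa [List.append_assoc] using htot
  obtain ⟨ls, hp, hf⟩ := claim R.n le_rfl
  rw [if_pos rfl] at hp
  have hc := chainPath R A c (R.n + 1) le_rfl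
  have hsrc : chainSrc R A c (R.n + 1) = Sum.inl c.qf := by
    unfold chainSrc; rw [if_neg (by omega), if_neg (by omega)]
  have hdst : chainDst R A c (R.n + 1) = Sum.inr (Sum.inl true) := by
    unfold chainDst; rw [if_neg (by omega), if_neg (by omega)]
  rw [hsrc, hdst] at hc
  have hfN : List.Forall₂ (· ≤ ·) (R.f (R.n + 1) (matchedVals R.n v))
      (choiceOut R A c (R.n + 1)) := hR.1 (R.n + 1) le_rfl _ _ hVle
  refine ⟨?_, Quot.mk _ (Sum.inr (Sum.inl false)), rfl,
    Quot.mk _ (Sum.inr (Sum.inl true)), rfl,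
    ls ++ choiceOut R A c (R.n + 1), hp.append' hc,
    List.rel_append hf hfN⟩
  intro a ha
  simp only [rewOutput, List.mem_append, List.mem_flatten, List.mem_map,
    List.mem_range] at ha
  rcases ha with ((h | ⟨b, hb, rfl⟩) | ⟨l, ⟨i, hi, rfl⟩, h⟩) | h
  · exact hR.2.1 0 (by omega) _ hVatom a h
  · exact hR.2.2.2 0 (by omega) b _ (huatom 0 (by omega) b hb) hVatom
  · rcases List.mem_append.mp h with h | h
    · exact hR.2.1 (i + 1) (by omega) _ hVatom a h
    · obtain ⟨b, hb, rfl⟩ := List.mem_map.mp h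
      exact hR.2.2.2 (i + 1) (by omega) b _ (huatom (i + 1) (by omega) b hb) hVatom
  · exact hR.2.1 (R.n + 1) (by omega) _ hVatom a h
end
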